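/- Let c ∈ ℝ, g ∈ ℝⁿ, and H a symmetric n×n matrix, and define M = [[0, gᵀ],[g, H]]. Then for every x ∈ ℝⁿ with -1 ≤ x ≤ 1, c + gᵀx + (1/2)xᵀHx ≤ c + (1/2)·Σᵢ max(κᵢ - min(λ_min(diag(κ) - M), 0), 0) for every nonnegative vector κ ∈ ℝⁿ⁺¹. -/

import Mathlib

open Matrix

/-- The smallest eigenvalue of a real symmetric matrix, characterized as the
largest `μ` such that `M - μ • 1` is positive semidefinite. -/
noncomputable def minEig {k : Type*} [Fintype k] [DecidableEq k]
    (M : Matrix k k ℝ) : ℝ :=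
  sSup {μ : ℝ | (M - μ • (1 : Matrix k k ℝ)).PosSemidef}

lemma quad_lb {k : Type*} [Fintype k] (A : Matrix k k ℝ) (z : k → ℝ) :
    -(∑ i, ∑ j, |A i j|) * ∑ i, (z i)^2 ≤ z ⬝ᵥ A.mulVec z := by
  have h : z ⬝ᵥ A.mulVec z = ∑ i, ∑ j, A i j * z i * z j := by
    simp only [dotProduct, mulVec, Finset.mul_sum]
    exact Finset.sum_congr rfl fun i _ => Finset.sum_congr rfl fun j _ => by ring
  rw [h, neg_mul, Finset.sum_mul, ← Finset.sum_neg_distrib]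
  refine Finset.sum_le_sum fun i _ => ?_
  rw [Finset.sum_mul, ← Finset.sum_neg_distrib]
  refine Finset.sum_le_sum fun j _ => ?_
  have hi : (z i)^2 ≤ ∑ l, (z l)^2 :=
    Finset.single_le_sum (fun l _ => sq_nonneg (z l)) (Finset.mem_univ i)
  have hj : (z j)^2 ≤ ∑ l, (z l)^2 :=
    Finset.single_le_sum (fun l _ => sq_nonneg (z l)) (Finset.mem_univ j)
  have habs : |A i j * z i * z j| ≤ |A i j| * ∑ l, (z l)^2 := by
    rw [abs_mul, abs_mul]
    have : |z i| * |z j| ≤ ∑ l, (z l)^2 := by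
      nlinarith [abs_nonneg (z i), abs_nonneg (z j), sq_abs (z i), sq_abs (z j), sq_nonneg (|z i| - |z j|)]
    have := mul_le_mul_of_nonneg_left this (abs_nonneg (A i j))
    calc |A i j| * |z i| * |z j| = |A i j| * (|z i| * |z j|) := by ring
      _ ≤ |A i j| * ∑ l, (z l)^2 := this
  have := neg_abs_le (A i j * z i * z j)
  linarith

lemma nonempty_S {k : Type*} [Fintype k] [DecidableEq k] (A : Matrix k k ℝ)
    (hA : A.IsHermitian) :
    ((A - (-(∑ i, ∑ j, |A i j|)) • (1 : Matrix k k ℝ))).PosSemidef := by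
  rw [posSemidef_iff_dotProduct_mulVec]
  constructor
  · exact hA.sub (by simp [Matrix.IsHermitian, Matrix.conjTranspose_smul])
  · intro z
    have := quad_lb A z
    simp only [star_trivial, sub_mulVec, dotProduct_sub, smul_mulVec,
      one_mulVec, dotProduct_smul, smul_eq_mul]
    have hz : z ⬝ᵥ z = ∑ i, (z i)^2 := by simp [dotProduct, sq]
    rw [hz]
    nlinarith

lemma minEig_quad {k : Type*} [Fintype k] [DecidableEq k] (A : Matrix k k ℝ)
    (hA : A.IsHermitian) (z : k → ℝ) (hz : 0 < ∑ i, (z i)^2) :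
    min (minEig A) 0 * ∑ i, (z i)^2 ≤ z ⬝ᵥ A.mulVec z := by
  set a := ∑ i, (z i)^2 with ha
  set q := z ⬝ᵥ A.mulVec z with hq
  have hub : ∀ μ ∈ {μ : ℝ | (A - μ • (1 : Matrix k k ℝ)).PosSemidef}, μ ≤ q / a := by
    intro μ hμ
    have := hμ.dotProduct_mulVec_nonneg z
    simp only [star_trivial, sub_mulVec, dotProduct_sub, smul_mulVec,
      one_mulVec, dotProduct_smul, smul_eq_mul] at this
    have hzz : z ⬝ᵥ z = a := by simp [ha, dotProduct, sq]
    rw [hzz] at this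
    rw [le_div_iff₀ hz]
    linarith
  have hne : {μ : ℝ | (A - μ • (1 : Matrix k k ℝ)).PosSemidef}.Nonempty :=
    ⟨_, nonempty_S A hA⟩
  have hsup : minEig A ≤ q / a := csSup_le hne hub
  have : min (minEig A) 0 ≤ q / a := by
    rcases le_or_gt (q/a) 0 with h | h
    · exact le_trans (min_le_left _ _) hsup
    · exact le_trans (min_le_right _ _) h.le
  calc min (minEig A) 0 * a ≤ (q / a) * a :=
        mul_le_mul_of_nonneg_right this hz.le
    _ = q := div_mul_cancel₀ q hz.ne'

theorem stmt_5 (n : ℕ) (c : ℝ) (g : Fin n → ℝ) (H : Matrix (Fin n) (Fin n) ℝ)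
    (hH : H.IsHermitian)
    (M : Matrix (Fin 1 ⊕ Fin n) (Fin 1 ⊕ Fin n) ℝ)
    (hM : M = Matrix.fromBlocks 0
      (Matrix.of fun (_ : Fin 1) (j : Fin n) => g j)
      (Matrix.of fun (i : Fin n) (_ : Fin 1) => g i) H)
    (κ : Fin 1 ⊕ Fin n → ℝ) (hκ : ∀ i, 0 ≤ κ i)
    (x : Fin n → ℝ) (hx : ∀ i, -1 ≤ x i ∧ x i ≤ 1) :
    c + (∑ i, g i * x i) + (1 / 2) * (x ⬝ᵥ H.mulVec x)
      ≤ c + (1 / 2) *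
        ∑ i, max (κ i - min (minEig (Matrix.diagonal κ - M)) 0) 0 := by
  set z : Fin 1 ⊕ Fin n → ℝ := Sum.elim (fun _ => 1) x with hzdef
  have hMherm : M.IsHermitian := by
    subst hM
    rw [Matrix.isHermitian_fromBlocks_iff]
    refine ⟨?_, rfl, ?_, hH⟩ <;> ext i j <;> simp [Matrix.IsHermitian]
  have hD : (Matrix.diagonal κ - M).IsHermitian :=
    (Matrix.isHermitian_diagonal κ).sub hMherm
  have hzsq : ∀ i, (z i)^2 ≤ 1 := by
    rintro (i | i)
    · simp [hzdef]
    · simp only [hzdef, Sum.elim_inr]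
      nlinarith [(hx i).1, (hx i).2]
  have ha : 0 < ∑ i, (z i)^2 := by
    rw [Fintype.sum_sum_type]
    have : ∀ i : Fin 1, (z (Sum.inl i))^2 = 1 := fun i => by simp [hzdef]
    simp only [this, Finset.sum_const, Finset.card_univ, Fintype.card_fin, one_smul]
    have : (0:ℝ) ≤ ∑ i : Fin n, (z (Sum.inr i))^2 :=
      Finset.sum_nonneg fun i _ => sq_nonneg _
    linarith
  have hMz : z ⬝ᵥ M.mulVec z = 2 * (∑ i, g i * x i) + x ⬝ᵥ H.mulVec x := by
    subst hM
    have e1 : ∀ i, x i * (g i + ∑ j, H i j * x j)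
        = x i * g i + ∑ j, x i * (H i j * x j) := fun i => by
      rw [mul_add, Finset.mul_sum]
    simp only [hzdef, dotProduct, mulVec, Fintype.sum_sum_type, Matrix.fromBlocks,
      Finset.mul_sum]
    simp only [Sum.elim_inl, Sum.elim_inr, Matrix.of_apply, Matrix.zero_apply,
      one_mul, mul_one, zero_mul, mul_zero, Finset.sum_const_zero, zero_add, add_zero,
      Fin.sum_univ_one, e1, Finset.sum_add_distrib]
    have e2 : ∑ i, 2 * (g i * x i) = (∑ i, g i * x i) + ∑ i, x i * g i := by
      rw [← Finset.sum_add_distrib]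
      exact Finset.sum_congr rfl fun i _ => by ring
    linarith [e2]
  have hdiagz : z ⬝ᵥ (Matrix.diagonal κ).mulVec z = ∑ i, κ i * (z i)^2 := by
    simp only [dotProduct, mulVec_diagonal]
    exact Finset.sum_congr rfl fun i _ => by ring
  have key := minEig_quad (Matrix.diagonal κ - M) hD z ha
  set lam := min (minEig (Matrix.diagonal κ - M)) 0 with hlam
  have hlam0 : lam ≤ 0 := min_le_right _ _
  have hsub : z ⬝ᵥ (Matrix.diagonal κ - M).mulVec z
      = (∑ i, κ i * (z i)^2) - z ⬝ᵥ M.mulVec z := by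
    rw [Matrix.sub_mulVec, dotProduct_sub, hdiagz]
  have hbound : z ⬝ᵥ M.mulVec z ≤ ∑ i, max (κ i - lam) 0 := by
    have h1 : z ⬝ᵥ M.mulVec z ≤ ∑ i, κ i * (z i)^2 - lam * ∑ i, (z i)^2 := by
      rw [hsub] at key; linarith
    have h2 : ∑ i, κ i * (z i)^2 - lam * ∑ i, (z i)^2
        = ∑ i, (κ i - lam) * (z i)^2 := by
      rw [Finset.mul_sum, ← Finset.sum_sub_distrib]
      exact Finset.sum_congr rfl fun i _ => by ring
    have h3 : ∑ i, (κ i - lam) * (z i)^2 ≤ ∑ i, max (κ i - lam) 0 := by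
      refine Finset.sum_le_sum fun i _ => ?_
      have hk : 0 ≤ κ i - lam := by linarith [hκ i]
      calc (κ i - lam) * (z i)^2 ≤ (κ i - lam) * 1 :=
            mul_le_mul_of_nonneg_left (hzsq i) hk
        _ = κ i - lam := mul_one _
        _ ≤ max (κ i - lam) 0 := le_max_left _ _
    linarith
  rw [hMz] at hbound
  linarith
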